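/- For any may-must argumentation F = (A, R, f_Q), any subset A₁ ⊆ A, and any labelling λ, there exists a designation conservative sub-argumentation of F with respect to A₁ and λ. Concretely, the tuple (A₁, R ∩ (A₁×A₁), f'_Q) works, where for each a ∈ A₁ with f_Q(a) = ((n₁,n₂),(m₁,m₂)), letting k_out (resp. k_in) be the number of attackers of a outside A₁ labelled out (resp. in) by λ, one sets f'_Q(a) = ((max(0, n₁−k_out), max(0, n₂−k_out)), (max(0, m₁−k_in), max(0, m₂−k_in))). -/
import Mathlib


inductive Lab : Type
  | inn | out | undec
deriving DecidableEq

structure MMA (A : Type) [Fintype A] [DecidableEq A] where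
  R : A → A → Prop
  decR : DecidableRel R
  n1 : A → ℕ
  n2 : A → ℕ
  m1 : A → ℕ
  m2 : A → ℕ
  hn : ∀ a, n1 a ≤ n2 a
  hm : ∀ a, m1 a ≤ m2 a

variable {A : Type} [Fintype A] [DecidableEq A]

/-- Number of attackers of `a` labelled `out` by `lam`. -/
def outCnt (F : MMA A) (lam : A → Lab) (a : A) : ℕ :=
  letI := F.decR
  (Finset.univ.filter (fun b => F.R b a ∧ lam b = Lab.out)).card

/-- Number of attackers of `a` labelled `in` by `lam`. -/
def inCnt (F : MMA A) (lam : A → Lab) (a : A) : ℕ :=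
  letI := F.decR
  (Finset.univ.filter (fun b => F.R b a ∧ lam b = Lab.inn)).card

/-- `lam` designates label `l` for argument `a` in `F`. -/
def designates (F : MMA A) (lam : A → Lab) (a : A) : Lab → Prop
  | Lab.inn => F.n1 a ≤ outCnt F lam a ∧ inCnt F lam a < F.m2 a
  | Lab.out => F.m1 a ≤ inCnt F lam a ∧ outCnt F lam a < F.n2 a
  | Lab.undec =>
      (F.n2 a ≤ outCnt F lam a ∧ F.m2 a ≤ inCnt F lam a) ∨
      (F.n1 a ≤ outCnt F lam a ∧ outCnt F lam a < F.n2 a) ∨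
      (F.m1 a ≤ inCnt F lam a ∧ inCnt F lam a < F.m2 a) ∨
      (outCnt F lam a < F.n1 a ∧ inCnt F lam a < F.m1 a)

/-- `a`'s label is proper under `lam`. -/
def proper (F : MMA A) (lam : A → Lab) (a : A) : Prop :=
  designates F lam a (lam a)

/-- Exact labelling: every argument's label is proper. -/
def exactLab (F : MMA A) (lam : A → Lab) : Prop :=
  ∀ a, proper F lam a

/-- Pre-maximally proper labelling. -/
def preMaxProper (F : MMA A) (lam : A → Lab) : Prop :=
  ∀ a, proper F lam a ∨ lam a = Lab.undec

/-- Maximally proper labelling. -/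
def maxProper (F : MMA A) (lam : A → Lab) : Prop :=
  preMaxProper F lam ∧
    ∀ lam', preMaxProper F lam' → ∀ a, proper F lam' a → proper F lam a

/-- The order `⪯` on labellings. -/
def labLE (l1 l2 : A → Lab) : Prop :=
  ∀ a, (l1 a = Lab.inn → l2 a = Lab.inn) ∧ (l1 a = Lab.out → l2 a = Lab.out)

/-- Number of attackers of `a` lying outside `A1` that `lam` labels `out`. -/
def extOut (F : MMA A) (A1 : Finset A) (lam : A → Lab) (a : A) : ℕ :=
  letI := F.decR
  (Finset.univ.filter (fun b => b ∉ A1 ∧ F.R b a ∧ lam b = Lab.out)).card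

/-- Number of attackers of `a` lying outside `A1` that `lam` labels `in`. -/
def extIn (F : MMA A) (A1 : Finset A) (lam : A → Lab) (a : A) : ℕ :=
  letI := F.decR
  (Finset.univ.filter (fun b => b ∉ A1 ∧ F.R b a ∧ lam b = Lab.inn)).card

lemma split_card (A1 : Finset A) (P : A → Prop) [DecidablePred P] :
    (Finset.univ.filter P).card =
      (Finset.univ.filter (fun b : {x // x ∈ A1} => P b.1)).card
        + (Finset.univ.filter (fun b : A => b ∉ A1 ∧ P b)).card := by
  classical
  have h1 : (Finset.univ.filter (fun b : {x // x ∈ A1} => P b.1)).card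
      = (Finset.univ.filter (fun b : A => b ∈ A1 ∧ P b)).card := by
    apply Finset.card_bij (fun b _ => b.1)
    · intro b hb
      simp only [Finset.mem_filter, Finset.mem_univ, true_and] at hb ⊢
      exact ⟨b.2, hb⟩
    · intro b _ c _ h; exact Subtype.ext h
    · intro b hb; simp at hb; exact ⟨⟨b, hb.1⟩, by simp [hb.2], rfl⟩
  rw [h1]
  rw [← Finset.card_filter_add_card_filter_not (p := fun b => b ∈ A1)
      (s := Finset.univ.filter P), Finset.filter_filter, Finset.filter_filter]
  congr 1
  · congr 1; ext b; simp [and_comm]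
  · congr 1; ext b; simp [and_comm]

theorem stmt6 (F : MMA A) (A1 : Finset A) (lam : A → Lab) :
    ∃ F' : MMA {x // x ∈ A1},
      (∀ b c : {x // x ∈ A1}, F'.R b c ↔ F.R b.1 c.1) ∧
      (∀ a : {x // x ∈ A1},
        F'.n1 a = F.n1 a.1 - extOut F A1 lam a.1 ∧
        F'.n2 a = F.n2 a.1 - extOut F A1 lam a.1 ∧
        F'.m1 a = F.m1 a.1 - extIn F A1 lam a.1 ∧
        F'.m2 a = F.m2 a.1 - extIn F A1 lam a.1) ∧
      (∀ (a : {x // x ∈ A1}) (lamx : {x // x ∈ A1} → Lab) (l : Lab),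
        designates F' lamx a l ↔
          designates F (fun b => if h : b ∈ A1 then lamx ⟨b, h⟩ else lam b) a.1 l) := by
  classical
  refine ⟨{ R := fun b c => F.R b.1 c.1,
            decR := fun b c => F.decR b.1 c.1,
            n1 := fun a => F.n1 a.1 - extOut F A1 lam a.1,
            n2 := fun a => F.n2 a.1 - extOut F A1 lam a.1,
            m1 := fun a => F.m1 a.1 - extIn F A1 lam a.1,
            m2 := fun a => F.m2 a.1 - extIn F A1 lam a.1,
            hn := fun a => Nat.sub_le_sub_right (F.hn a.1) _,
            hm := fun a => Nat.sub_le_sub_right (F.hm a.1) _ },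
          fun _ _ => Iff.rfl, fun a => ⟨rfl, rfl, rfl, rfl⟩, ?_⟩
  intro a lamx l
  letI := F.decR
  set F' : MMA {x // x ∈ A1} :=
    { R := fun b c => F.R b.1 c.1,
      decR := fun b c => F.decR b.1 c.1,
      n1 := fun a => F.n1 a.1 - extOut F A1 lam a.1,
      n2 := fun a => F.n2 a.1 - extOut F A1 lam a.1,
      m1 := fun a => F.m1 a.1 - extIn F A1 lam a.1,
      m2 := fun a => F.m2 a.1 - extIn F A1 lam a.1,
      hn := fun a => Nat.sub_le_sub_right (F.hn a.1) _,
      hm := fun a => Nat.sub_le_sub_right (F.hm a.1) _ } with hF'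
  set clam : A → Lab := fun b => if h : b ∈ A1 then lamx ⟨b, h⟩ else lam b with hclam
  have key : ∀ L : Lab,
      (Finset.univ.filter (fun b : A => F.R b a.1 ∧ clam b = L)).card
        = (Finset.univ.filter (fun b : {x // x ∈ A1} => F.R b.1 a.1 ∧ lamx b = L)).card
          + (Finset.univ.filter (fun b : A => b ∉ A1 ∧ F.R b a.1 ∧ lam b = L)).card := by
    intro L
    rw [split_card A1 (fun b => F.R b a.1 ∧ clam b = L)]
    congr 1
    · congr 1; ext b
      have : clam b.1 = lamx b := by simp [hclam, b.2]
      simp [this]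
    · congr 1; ext b
      by_cases h : b ∈ A1
      · simp [h]
      · have : clam b = lam b := by simp [hclam, h]
        simp [h, this]
  have hout : outCnt F clam a.1 = outCnt F' lamx a + extOut F A1 lam a.1 := by
    simpa [outCnt, extOut] using key Lab.out
  have hin : inCnt F clam a.1 = inCnt F' lamx a + extIn F A1 lam a.1 := by
    simpa [inCnt, extIn] using key Lab.inn
  cases l <;>
    simp only [designates, hout, hin, hF'] <;> omega
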